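/- Let γ, λ be real numbers with λ² ≤ 6, and let J(D) be the 2×2 Jacobian matrix of the map W evaluated at D = (λ/√6, √(1 − λ²/6)). Then the characteristic polynomial of J(D) equals (X − (λ² − 4)/2)·(X − (1 + λ² − 3γ)); equivalently, the eigenvalues of J(D) are (λ² − 4)/2 and 1 + λ² − 3γ. -/
import Mathlib


/-- The Jacobian matrix of the Euler-discretized quintessence map W at (x,y). -/
noncomputable def J (γ lam x y : ℝ) : Matrix (Fin 2) (Fin 2) ℝ :=
  !![(-2 + 3*γ/2) + x^2*(9 - 9*γ/2) - (3*γ/2)*y^2, -3*γ*x*y + Real.sqrt 6 * lam * y;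
     6*x*y - 3*γ*x*y - Real.sqrt (3/2) * lam * y,
       (3*γ/2 + 1) - Real.sqrt (3/2)*lam*x + (3 - 3*γ/2)*x^2 - (9*γ/2)*y^2]

open Polynomial in
lemma my_charpoly_fin_two (M : Matrix (Fin 2) (Fin 2) ℝ) :
    M.charpoly = X^2 - C M.trace * X + C M.det := by
  rw [Matrix.charpoly, Matrix.det_fin_two]
  rw [Matrix.charmatrix_apply_eq, Matrix.charmatrix_apply_eq,
    Matrix.charmatrix_apply_ne _ _ _ (by decide), Matrix.charmatrix_apply_ne _ _ _ (by decide),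
    Matrix.trace_fin_two, Matrix.det_fin_two]
  simp only [map_add, map_mul, map_sub]
  ring

open Polynomial in
/-- The characteristic polynomial of the Jacobian of W at the fixed point
D = (λ/√6, √(1 − λ²/6)) is (X − (λ² − 4)/2)(X − (1 + λ² − 3γ)). -/
theorem stmt_7 (γ lam : ℝ) (h : lam^2 ≤ 6) :
    (J γ lam (lam / Real.sqrt 6) (Real.sqrt (1 - lam^2/6))).charpoly =
      (X - C ((lam^2 - 4)/2)) * (X - C (1 + lam^2 - 3*γ)) := by
  set s : ℝ := Real.sqrt 6 with hsdef
  set t : ℝ := Real.sqrt (1 - lam^2/6) with htdef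
  have h6 : s * s = 6 := Real.mul_self_sqrt (by norm_num)
  have hspos : (0:ℝ) < s := Real.sqrt_pos.mpr (by norm_num)
  have hy2 : t^2 = 1 - lam^2/6 := Real.sq_sqrt (by linarith)
  have hs : Real.sqrt (3/2) = s / 2 := by
    rw [show (3/2:ℝ) = 6/4 by norm_num, Real.sqrt_div (by norm_num),
      show (4:ℝ) = 2^2 by norm_num, Real.sqrt_sq (by norm_num), hsdef]
  have hsx : s * (lam / s) = lam := by
    rw [mul_comm, div_mul_cancel₀ _ hspos.ne']
  have hs2 : s^2 = 6 := by rw [sq]; exact h6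
  have hx2 : (lam / s)^2 = lam^2 / 6 := by
    rw [div_pow, hs2]
  have hA : (-2 + 3*γ/2) + (lam/s)^2*(9 - 9*γ/2) - (3*γ/2)*t^2
      = -2 + (3-γ)/2*lam^2 := by
    linear_combination (9 - 9*γ/2)*hx2 - (3*γ/2)*hy2
  have hB : -3*γ*(lam/s)*t + s * lam * t = (1-γ/2)*lam*(s*t) := by
    linear_combination (-(γ/2)*s*t)*hsx + ((γ/2)*(lam/s)*t)*h6
  have hC : 6*(lam/s)*t - 3*γ*(lam/s)*t - s/2 * lam * t = ((1-γ)/2)*lam*(s*t) := by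
    linear_combination (((2-γ)/2)*s*t)*hsx + (-((2-γ)/2)*(lam/s)*t)*h6
  have hD : (3*γ/2 + 1) - s/2*lam*(lam/s) + (3 - 3*γ/2)*(lam/s)^2 - (9*γ/2)*t^2
      = 1 - 3*γ + γ/2*lam^2 := by
    linear_combination (-(lam/2))*hsx + (3 - 3*γ/2)*hx2 + (-(9*γ/2))*hy2
  have htt : t*t = 1 - lam^2/6 := by rw [← sq]; exact hy2
  have hst : (s*t)*(s*t) = 6 - lam^2 := by
    linear_combination (t*t)*h6 + 6*htt
  rw [my_charpoly_fin_two]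
  have htr : (J γ lam (lam / s) t).trace = (lam^2 - 4)/2 + (1 + lam^2 - 3*γ) := by
    rw [J, Matrix.trace_fin_two_of, hs, hA, hD]
    ring
  have hdet : (J γ lam (lam / s) t).det = (lam^2 - 4)/2 * (1 + lam^2 - 3*γ) := by
    rw [J, Matrix.det_fin_two_of, hs, hA, hB, hC, hD]
    linear_combination (-(1-γ/2)*((1-γ)/2)*lam^2)*hst
  rw [htr, hdet, C_add, C_mul]
  ring
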